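/- Let Λ, β, α, μ₁, μ₂, d₁, d₂ > 0, θ ∈ ℝ, c ∈ ℝ, S₀ = Λ/μ₁. Suppose S, I : ℝ → ℝ are differentiable, I(ξ) ≥ 0 and S(ξ) ≥ 0 for all ξ, and (S, I) solves the traveling-wave system cS'(ξ) = d₁𝔍[S](ξ) + Λ − βS(ξ)I(ξ)/(1 + αI(ξ)) − μ₁S(ξ), cI'(ξ) = d₂𝔍[I](ξ) + βS(ξ)I(ξ)/(1 + αI(ξ)) − μ₂I(ξ) for all ξ ∈ ℝ. Then: (i) S(ξ) > 0 for every ξ ∈ ℝ; (ii) if in addition S(ξ) ≤ S₀ for all ξ and I(ξ) > 0 for all ξ, then S(ξ) < S₀ for every ξ ∈ ℝ. -/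

import Mathlib

/-- Discrete Laplacian in direction `θ`. -/
noncomputable def lap (θ : ℝ) (φ : ℝ → ℝ) (ξ : ℝ) : ℝ :=
  φ (ξ + Real.sin θ) + φ (ξ - Real.sin θ) + φ (ξ + Real.cos θ) + φ (ξ - Real.cos θ) - 4 * φ ξ

theorem stmt_11 (Λ β α μ₁ μ₂ d₁ d₂ θ c : ℝ)
    (hΛ : 0 < Λ) (hβ : 0 < β) (hα : 0 < α) (hμ₁ : 0 < μ₁) (hμ₂ : 0 < μ₂)
    (hd₁ : 0 < d₁) (hd₂ : 0 < d₂)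
    (S₀ : ℝ) (hS₀ : S₀ = Λ / μ₁)
    (S I : ℝ → ℝ)
    (hSdiff : Differentiable ℝ S) (hIdiff : Differentiable ℝ I)
    (hSpos : ∀ ξ : ℝ, 0 ≤ S ξ) (hIpos : ∀ ξ : ℝ, 0 ≤ I ξ)
    (hSeq : ∀ ξ : ℝ, c * deriv S ξ =
      d₁ * lap θ S ξ + Λ - β * S ξ * I ξ / (1 + α * I ξ) - μ₁ * S ξ)
    (hIeq : ∀ ξ : ℝ, c * deriv I ξ =
      d₂ * lap θ I ξ + β * S ξ * I ξ / (1 + α * I ξ) - μ₂ * I ξ) :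
    (∀ ξ : ℝ, 0 < S ξ) ∧
    ((∀ ξ : ℝ, S ξ ≤ S₀) → (∀ ξ : ℝ, 0 < I ξ) → ∀ ξ : ℝ, S ξ < S₀) := by
  constructor
  · intro ξ
    rcases (hSpos ξ).lt_or_eq with h | h
    · exact h
    · exfalso
      -- ξ is a global (hence local) minimum of S
      have hmin : IsLocalMin S ξ :=
        Filter.Eventually.of_forall (fun y => by rw [← h]; exact hSpos y)
      have hder : deriv S ξ = 0 := hmin.deriv_eq_zero
      have hlap : 0 ≤ lap θ S ξ := by
        unfold lap
        have h1 := hSpos (ξ + Real.sin θ)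
        have h2 := hSpos (ξ - Real.sin θ)
        have h3 := hSpos (ξ + Real.cos θ)
        have h4 := hSpos (ξ - Real.cos θ)
        rw [← h]; linarith
      have heq := hSeq ξ
      rw [hder, ← h] at heq
      simp at heq
      nlinarith [mul_nonneg hd₁.le hlap]
  · intro hSle hIgt ξ
    rcases (hSle ξ).lt_or_eq with h | h
    · exact h
    · exfalso
      -- ξ is a global (hence local) maximum of S
      have hmax : IsLocalMax S ξ :=
        Filter.Eventually.of_forall (fun y => by rw [h]; exact hSle y)
      have hder : deriv S ξ = 0 := hmax.deriv_eq_zero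
      have hlap : lap θ S ξ ≤ 0 := by
        unfold lap
        have h1 := hSle (ξ + Real.sin θ)
        have h2 := hSle (ξ - Real.sin θ)
        have h3 := hSle (ξ + Real.cos θ)
        have h4 := hSle (ξ - Real.cos θ)
        rw [h]; linarith
      have hS₀pos : 0 < S₀ := hS₀ ▸ div_pos hΛ hμ₁
      have hdenpos : 0 < 1 + α * I ξ := by nlinarith [hIpos ξ, mul_nonneg hα.le (hIpos ξ)]
      have hterm : 0 < β * S ξ * I ξ / (1 + α * I ξ) := by
        apply div_pos _ hdenpos
        rw [h]; exact mul_pos (mul_pos hβ hS₀pos) (hIgt ξ)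
      have hΛeq : Λ - μ₁ * S ξ = 0 := by
        rw [h, hS₀]; field_simp; ring
      have heq := hSeq ξ
      rw [hder] at heq
      nlinarith [mul_nonpos_of_nonneg_of_nonpos hd₁.le hlap]
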